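/- Let t0, y0 ∈ ℝ, a > 0, I = [t0, t0+a], let f : I × ℝ → ℝ be continuous, and let α be a lower solution and β an upper solution of y' = f(t,y), y(t0) = y0 on I with α(t) ≤ β(t) for all t ∈ I. Then there exist differentiable functions φ_*, φ^* : I → ℝ, each satisfying φ(t0) = y0, φ' = f(t, φ) on I, and α ≤ φ ≤ β on I, such that every differentiable φ : I → ℝ with φ(t0) = y0, φ' = f(t, φ) on I, and α ≤ φ ≤ β on I satisfies φ_*(t) ≤ φ(t) ≤ φ^*(t) for all t ∈ I. -/

import Mathlib

open Set

open Filter MeasureTheory intervalIntegral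
open scoped Topology NNReal


lemma my_cont_max {f g : ℝ → ℝ} {s : Set ℝ} (hf : ContinuousOn f s) (hg : ContinuousOn g s) :
    ContinuousOn (fun x => max (f x) (g x)) s := by
  intro x hx
  have := (hf x hx).sup (hg x hx)
  exact this

lemma my_cont_min {f g : ℝ → ℝ} {s : Set ℝ} (hf : ContinuousOn f s) (hg : ContinuousOn g s) :
    ContinuousOn (fun x => min (f x) (g x)) s := by
  intro x hx
  have := (hf x hx).inf (hg x hx)
  exact this

lemma my_cont_max2 {f g : ℝ × ℝ → ℝ} {s : Set (ℝ × ℝ)} (hf : ContinuousOn f s)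
    (hg : ContinuousOn g s) : ContinuousOn (fun x => max (f x) (g x)) s := by
  intro x hx
  have := (hf x hx).sup (hg x hx)
  exact this

lemma my_cont_min2 {f g : ℝ × ℝ → ℝ} {s : Set (ℝ × ℝ)} (hf : ContinuousOn f s)
    (hg : ContinuousOn g s) : ContinuousOn (fun x => min (f x) (g x)) s := by
  intro x hx
  have := (hf x hx).inf (hg x hx)
  exact this



lemma my_cont_comp {K : ℝ≥0} {h : ℝ → ℝ → ℝ} {φ : ℝ → ℝ} {s : Set ℝ}
    (hL : ∀ t ∈ s, LipschitzWith K (h t))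
    (ht : ∀ y : ℝ, ContinuousOn (fun t => h t y) s)
    (hφ : ContinuousOn φ s) :
    ContinuousOn (fun t => h t (φ t)) s := by
  intro x hx
  rw [Metric.continuousWithinAt_iff]
  intro ε hε
  have hK1 : (0:ℝ) < (K:ℝ) + 1 := by positivity
  obtain ⟨δ1, hδ1, H1⟩ := Metric.continuousWithinAt_iff.1 (ht (φ x) x hx) (ε/2) (by linarith)
  obtain ⟨δ2, hδ2, H2⟩ := Metric.continuousWithinAt_iff.1 (hφ x hx) (ε/(2*((K:ℝ)+1)))
    (by positivity)
  refine ⟨min δ1 δ2, lt_min hδ1 hδ2, fun t htm hdist => ?_⟩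
  have h1 : dist (h t (φ x)) (h x (φ x)) < ε/2 := H1 htm (lt_of_lt_of_le hdist (min_le_left _ _))
  have h2 : dist (φ t) (φ x) < ε/(2*((K:ℝ)+1)) := H2 htm (lt_of_lt_of_le hdist (min_le_right _ _))
  have h3 : dist (h t (φ t)) (h t (φ x)) ≤ (K:ℝ) * dist (φ t) (φ x) :=
    (hL t htm).dist_le_mul _ _
  have h4 : (K:ℝ) * dist (φ t) (φ x) ≤ ((K:ℝ)+1) * (ε/(2*((K:ℝ)+1))) := by
    have hd0 : 0 ≤ dist (φ t) (φ x) := dist_nonneg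
    nlinarith
  have h5 : ((K:ℝ)+1) * (ε/(2*((K:ℝ)+1))) = ε/2 := by field_simp
  calc dist (h t (φ t)) (h x (φ x))
      ≤ dist (h t (φ t)) (h t (φ x)) + dist (h t (φ x)) (h x (φ x)) := dist_triangle _ _ _
    _ < ε/2 + ε/2 := by rw [h5] at h4; linarith
    _ = ε := by ring

lemma my_approx {I : Set ℝ} {g : ℝ → ℝ → ℝ} {C : ℝ}
    (hC : 0 ≤ C)
    (hb : ∀ t ∈ I, ∀ y : ℝ, |g t y| ≤ C)
    (huc : ∀ ε > 0, ∃ δ > 0, ∀ t ∈ I, ∀ s ∈ I, ∀ y z : ℝ,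
      |t - s| < δ → |y - z| < δ → |g t y - g s z| ≤ ε)
    {ε : ℝ} (hε : 0 < ε) :
    ∃ K : ℝ≥0, ∃ h : ℝ → ℝ → ℝ,
      (∀ t ∈ I, LipschitzWith K (h t)) ∧
      (∀ y : ℝ, ContinuousOn (fun t => h t y) I) ∧
      (∀ t ∈ I, ∀ y : ℝ, g t y ≤ h t y ∧ h t y ≤ g t y + ε) := by
  obtain ⟨δ, hδ, hδε⟩ := huc ε hε
  obtain ⟨L, hLdef⟩ : ∃ L : ℝ, L = 2*C/δ + 1 := ⟨_, rfl⟩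
  have hL0 : 0 < L := by rw [hLdef]; positivity
  obtain ⟨h, hhdef⟩ : ∃ h : ℝ → ℝ → ℝ,
      h = fun t y => sSup (range (fun z => g t z - L * |y - z|)) := ⟨_, rfl⟩
  have hbdd : ∀ t ∈ I, ∀ y : ℝ, BddAbove (range (fun z => g t z - L * |y - z|)) := by
    intro t ht y
    refine ⟨C, ?_⟩
    rintro b ⟨z, rfl⟩
    have h1 := (abs_le.1 (hb t ht z)).2
    have h2 : 0 ≤ |y - z| := abs_nonneg _
    simp only
    nlinarith
  -- the two interface facts about h
  have hmem : ∀ t ∈ I, ∀ y z : ℝ, g t z - L * |y - z| ≤ h t y := by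
    intro t ht y z
    simp only [hhdef]
    exact le_csSup (hbdd t ht y) ⟨z, rfl⟩
  have hsup : ∀ t ∈ I, ∀ y : ℝ, ∀ A : ℝ, (∀ z : ℝ, g t z - L * |y - z| ≤ A) → h t y ≤ A := by
    intro t ht y A hA
    simp only [hhdef]
    refine csSup_le (range_nonempty _) ?_
    rintro b ⟨z, rfl⟩
    exact hA z
  have hge : ∀ t ∈ I, ∀ y : ℝ, g t y ≤ h t y := by
    intro t ht y
    have := hmem t ht y y
    simpa using this
  have hlip1 : ∀ t ∈ I, ∀ y1 y2 : ℝ, h t y1 ≤ h t y2 + L * |y1 - y2| := by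
    intro t ht y1 y2
    refine hsup t ht y1 _ fun z => ?_
    have htri : |y2 - z| ≤ |y2 - y1| + |y1 - z| := abs_sub_le _ _ _
    have hcomm : |y2 - y1| = |y1 - y2| := abs_sub_comm _ _
    have hm := hmem t ht y2 z
    nlinarith
  have hlip : ∀ t ∈ I, LipschitzWith L.toNNReal (h t) := by
    intro t ht
    refine LipschitzWith.of_dist_le_mul fun y1 y2 => ?_
    rw [Real.coe_toNNReal L hL0.le, Real.dist_eq, Real.dist_eq]
    have h1 := hlip1 t ht y1 y2
    have h2 := hlip1 t ht y2 y1
    have hcomm : |y2 - y1| = |y1 - y2| := abs_sub_comm _ _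
    rw [abs_le]
    constructor <;> nlinarith
  have hub : ∀ t ∈ I, ∀ y : ℝ, h t y ≤ g t y + ε := by
    intro t ht y
    refine hsup t ht y _ fun z => ?_
    by_cases hyz : |y - z| < δ
    · have h1 : |g t z - g t y| ≤ ε := by
        refine hδε t ht t ht z y (by rw [sub_self, abs_zero]; exact hδ) ?_
        rwa [abs_sub_comm] at hyz
      have h2 := (abs_le.1 h1).2
      have h3 : 0 ≤ L * |y - z| := by positivity
      linarith
    · push_neg at hyz
      have h1 : L * δ ≤ L * |y - z| := by nlinarith
      have h2 : L * δ = 2*C + δ := by rw [hLdef]; field_simp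
      have h3 := (abs_le.1 (hb t ht z)).2
      have h4 := (abs_le.1 (hb t ht y)).1
      linarith
  have hcont : ∀ y : ℝ, ContinuousOn (fun t => h t y) I := by
    intro y x hx
    rw [Metric.continuousWithinAt_iff]
    intro ε' hε'
    obtain ⟨δ', hδ', hδ'ε⟩ := huc (ε'/2) (by linarith)
    have key : ∀ t ∈ I, ∀ s ∈ I, |t - s| < δ' → h t y ≤ h s y + ε'/2 := by
      intro t ht s hs hts
      refine hsup t ht y _ fun z => ?_
      have h1 : |g t z - g s z| ≤ ε'/2 :=
        hδ'ε t ht s hs z z hts (by rw [sub_self, abs_zero]; exact hδ')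
      have h2 := hmem s hs y z
      have h3 := (abs_le.1 h1).2
      linarith
    refine ⟨δ', hδ', fun t htm hdist => ?_⟩
    rw [Real.dist_eq] at hdist ⊢
    have h1 := key t htm x hx hdist
    have h2 := key x hx t htm (by rwa [abs_sub_comm])
    rw [abs_lt]
    constructor <;> linarith
  exact ⟨L.toNNReal, h, hlip, hcont, fun t ht y => ⟨hge t ht y, hub t ht y⟩⟩


/-- Strict differential comparison: if `u t0 ≤ v t0` and `u' < v'` at any point of
contact, then `u ≤ v` on `[t0, T]`. -/
lemma my_strict_comparison {t0 T : ℝ} {u v u' v' : ℝ → ℝ}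
    (hu : ∀ t ∈ Icc t0 T, HasDerivWithinAt u (u' t) (Icc t0 T) t)
    (hv : ∀ t ∈ Icc t0 T, HasDerivWithinAt v (v' t) (Icc t0 T) t)
    (h0 : u t0 ≤ v t0)
    (hlt : ∀ t ∈ Icc t0 T, u t = v t → u' t < v' t) :
    ∀ t ∈ Icc t0 T, u t ≤ v t := by
  intro t1 ht1
  by_contra hc
  push_neg at hc
  set ψ : ℝ → ℝ := fun t => v t - u t with hψ
  have hψc : ContinuousOn ψ (Icc t0 T) := fun t ht =>
    ((hv t ht).sub (hu t ht)).continuousWithinAt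
  set Z : Set ℝ := {t ∈ Icc t0 t1 | 0 ≤ ψ t} with hZ
  have ht01 : t0 ≤ t1 := ht1.1
  have hsub : Icc t0 t1 ⊆ Icc t0 T := Icc_subset_Icc_right ht1.2
  have hZne : t0 ∈ Z := ⟨left_mem_Icc.2 ht01, by simp [hψ]; linarith⟩
  have hZclosed : IsClosed Z := by
    have : ContinuousOn ψ (Icc t0 t1) := hψc.mono hsub
    exact this.preimage_isClosed_of_isClosed isClosed_Icc isClosed_Ici
  have hZcpt : IsCompact Z :=
    isCompact_Icc.of_isClosed_subset hZclosed (fun t ht => ht.1)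
  set τ := sSup Z with hτ
  have hτZ : τ ∈ Z := hZcpt.sSup_mem ⟨t0, hZne⟩
  have hτI : τ ∈ Icc t0 t1 := hτZ.1
  have hψτ : 0 ≤ ψ τ := hτZ.2
  have hτT : τ ∈ Icc t0 T := hsub hτI
  have hτt1 : τ < t1 := by
    rcases lt_or_eq_of_le hτI.2 with h | h
    · exact h
    · exfalso; rw [h] at hψτ; simp only [hψ] at hψτ; linarith
  have hbdd : BddAbove Z := ⟨t1, fun t ht => ht.1.2⟩
  have hneg : ∀ s ∈ Ioc τ t1, ψ s < 0 := by
    intro s hs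
    by_contra hns
    push_neg at hns
    have hsZ : s ∈ Z := ⟨⟨le_trans hτI.1 hs.1.le, hs.2⟩, hns⟩
    exact absurd (le_csSup hbdd hsZ) (not_le.2 hs.1)
  -- ψ τ ≤ 0 by right continuity
  have hIocmem : Ioc τ t1 ∈ 𝓝[>] τ := Ioc_mem_nhdsGT_of_mem ⟨le_refl τ, hτt1⟩
  have hIccmem : Icc t0 T ∈ 𝓝[>] τ := by
    filter_upwards [Ioc_mem_nhdsGT_of_mem (⟨le_refl τ, lt_of_lt_of_le hτt1 ht1.2⟩ : τ ∈ Ico τ T)]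
      with s hs
    exact ⟨le_trans hτT.1 hs.1.le, hs.2⟩
  have hcwa : Tendsto ψ (𝓝[>] τ) (𝓝 (ψ τ)) :=
    (hψc τ hτT).mono_of_mem_nhdsWithin hIccmem
  have hψτ0 : ψ τ ≤ 0 := by
    refine le_of_tendsto hcwa ?_
    filter_upwards [hIocmem] with s hs
    exact (hneg s hs).le
  have hψτeq : ψ τ = 0 := le_antisymm hψτ0 hψτ
  have huv : u τ = v τ := by have := hψτeq; simp only [hψ] at this; linarith
  have hd : u' τ < v' τ := hlt τ hτT huv
  -- slope argument
  have hψd : HasDerivWithinAt ψ (v' τ - u' τ) (Icc t0 T) τ :=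
    (hv τ hτT).sub (hu τ hτT)
  rw [hasDerivWithinAt_iff_tendsto_slope] at hψd
  have hsubset : Ioc τ t1 ⊆ Icc t0 T \ {τ} := fun s hs =>
    ⟨⟨le_trans hτT.1 hs.1.le, le_trans hs.2 ht1.2⟩, ne_of_gt hs.1⟩
  have hNeBot : (𝓝[Ioc τ t1] τ).NeBot := by
    rw [← mem_closure_iff_nhdsWithin_neBot, closure_Ioc (ne_of_lt hτt1)]
    exact left_mem_Icc.2 hτt1.le
  have hslope : Tendsto (slope ψ τ) (𝓝[Ioc τ t1] τ) (𝓝 (v' τ - u' τ)) :=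
    hψd.mono_left (nhdsWithin_mono τ hsubset)
  have hpos : ∀ᶠ s in 𝓝[Ioc τ t1] τ, 0 < slope ψ τ s :=
    hslope.eventually (eventually_gt_nhds (by linarith))
  obtain ⟨s, hs0, hsm⟩ := (hpos.and self_mem_nhdsWithin).exists
  have hst : τ < s := hsm.1
  have : 0 < ψ s := by
    have hslope_eq : slope ψ τ s = ψ s / (s - τ) := by
      rw [slope_def_field, hψτeq]
      ring
    rw [hslope_eq] at hs0
    have := mul_pos hs0 (sub_pos.2 hst)
    rwa [div_mul_cancel₀] at this
    linarith
  exact absurd this (not_lt.2 (hneg s hsm).le)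
lemma my_greatest (t0 y0 a : ℝ) (ha : 0 < a)
    (f : ℝ → ℝ → ℝ)
    (hf : ContinuousOn (fun p : ℝ × ℝ => f p.1 p.2)
      (Icc t0 (t0 + a) ×ˢ (univ : Set ℝ)))
    (α β α' β' : ℝ → ℝ)
    (hαd : ∀ t ∈ Icc t0 (t0 + a), HasDerivWithinAt α (α' t) (Icc t0 (t0 + a)) t)
    (hα0 : α t0 ≤ y0)
    (hαf : ∀ t ∈ Icc t0 (t0 + a), α' t ≤ f t (α t))
    (hβd : ∀ t ∈ Icc t0 (t0 + a), HasDerivWithinAt β (β' t) (Icc t0 (t0 + a)) t)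
    (hβ0 : y0 ≤ β t0)
    (hβf : ∀ t ∈ Icc t0 (t0 + a), f t (β t) ≤ β' t)
    (hαβ : ∀ t ∈ Icc t0 (t0 + a), α t ≤ β t) :
    ∃ φh : ℝ → ℝ,
      φh t0 = y0 ∧
      (∀ t ∈ Icc t0 (t0 + a), HasDerivWithinAt φh (f t (φh t)) (Icc t0 (t0 + a)) t) ∧
      (∀ t ∈ Icc t0 (t0 + a), α t ≤ φh t ∧ φh t ≤ β t) ∧
      ∀ φ : ℝ → ℝ, φ t0 = y0 →
        (∀ t ∈ Icc t0 (t0 + a), HasDerivWithinAt φ (f t (φ t)) (Icc t0 (t0 + a)) t) →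
        (∀ t ∈ Icc t0 (t0 + a), α t ≤ φ t ∧ φ t ≤ β t) →
        ∀ t ∈ Icc t0 (t0 + a), φ t ≤ φh t := by
  have haa : t0 ≤ t0 + a := by linarith
  have htI : t0 ∈ Icc t0 (t0 + a) := ⟨le_refl _, haa⟩
  have hIne : (Icc t0 (t0 + a)).Nonempty := ⟨t0, htI⟩
  have hαcont : ContinuousOn α (Icc t0 (t0 + a)) :=
    fun t ht => (hαd t ht).continuousWithinAt
  have hβcont : ContinuousOn β (Icc t0 (t0 + a)) :=
    fun t ht => (hβd t ht).continuousWithinAt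
  -- global lower/upper bounds for the funnel
  obtain ⟨tA, htA, hminA⟩ := isCompact_Icc.exists_isMinOn hIne hαcont
  obtain ⟨tB, htB, hmaxB⟩ := isCompact_Icc.exists_isMaxOn hIne hβcont
  obtain ⟨A, hAdef⟩ : ∃ A : ℝ, A = α tA := ⟨_, rfl⟩
  obtain ⟨B, hBdef⟩ : ∃ B : ℝ, B = β tB := ⟨_, rfl⟩
  have hA : ∀ t ∈ Icc t0 (t0 + a), A ≤ α t := fun t ht => hAdef ▸ hminA ht
  have hB : ∀ t ∈ Icc t0 (t0 + a), β t ≤ B := fun t ht => hBdef ▸ hmaxB ht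
  -- the clamping map
  obtain ⟨c, hcdef⟩ : ∃ c : ℝ → ℝ → ℝ,
      c = fun t y => max (α t) (min y (β t)) := ⟨_, rfl⟩
  have hc1 : ∀ t ∈ Icc t0 (t0 + a), ∀ y : ℝ, α t ≤ c t y ∧ c t y ≤ β t := by
    intro t ht y
    rw [hcdef]
    exact ⟨le_max_left _ _, max_le (hαβ t ht) (min_le_right _ _)⟩
  have hc2 : ∀ t ∈ Icc t0 (t0 + a), ∀ y : ℝ, α t ≤ y → y ≤ β t → c t y = y := by
    intro t ht y h1 h2
    rw [hcdef]
    simp only [min_eq_left h2, max_eq_right h1]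
  have hc3 : ∀ t ∈ Icc t0 (t0 + a), ∀ y : ℝ, β t ≤ y → c t y = β t := by
    intro t ht y h1
    rw [hcdef]
    simp only [min_eq_right h1, max_eq_right (hαβ t ht)]
  have hc5 : ∀ t ∈ Icc t0 (t0 + a), ∀ y : ℝ, c t y ∈ Icc A B := by
    intro t ht y
    exact ⟨le_trans (hA t ht) (hc1 t ht y).1, le_trans (hc1 t ht y).2 (hB t ht)⟩
  have hclipy : ∀ t y z : ℝ, |c t y - c t z| ≤ |y - z| := by
    intro t y z
    rw [hcdef]
    refine le_trans (abs_max_sub_max_le_max _ _ _ _) (max_le (by simp) ?_)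
    refine le_trans (abs_min_sub_min_le_max _ _ _ _) (max_le (le_refl _) (by simp [abs_nonneg]))
  have hclipt : ∀ t s y : ℝ, |c t y - c s y| ≤ max (|α t - α s|) (|β t - β s|) := by
    intro t s y
    rw [hcdef]
    refine le_trans (abs_max_sub_max_le_max _ _ _ _) (max_le (le_max_left _ _) ?_)
    refine le_trans (abs_min_sub_min_le_max _ _ _ _) (max_le ?_ (le_max_right _ _))
    simp [abs_nonneg]
  -- the modified right-hand side
  obtain ⟨g, hgdef⟩ : ∃ g : ℝ → ℝ → ℝ, g = fun t y => f t (c t y) := ⟨_, rfl⟩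
  have hScpt : IsCompact (Icc t0 (t0 + a) ×ˢ Icc A B) := isCompact_Icc.prod isCompact_Icc
  have hfS : ContinuousOn (fun p : ℝ × ℝ => f p.1 p.2) (Icc t0 (t0 + a) ×ˢ Icc A B) :=
    hf.mono (prod_mono subset_rfl (subset_univ _))
  obtain ⟨C0, hC0⟩ := hScpt.exists_bound_of_continuousOn hfS
  obtain ⟨C, hCdef⟩ : ∃ C : ℝ, C = max C0 0 := ⟨_, rfl⟩
  have hC : 0 ≤ C := hCdef ▸ le_max_right _ _
  have hgb : ∀ t ∈ Icc t0 (t0 + a), ∀ y : ℝ, |g t y| ≤ C := by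
    intro t ht y
    rw [hgdef, hCdef]
    have := hC0 (t, c t y) ⟨ht, hc5 t ht y⟩
    exact le_trans this (le_max_left _ _)
  -- uniform continuity data for g
  have hguc : ∀ ε > 0, ∃ δ > 0, ∀ t ∈ Icc t0 (t0 + a), ∀ s ∈ Icc t0 (t0 + a), ∀ y z : ℝ,
      |t - s| < δ → |y - z| < δ → |g t y - g s z| ≤ ε := by
    intro ε hε
    have hufc := hScpt.uniformContinuousOn_of_continuous hfS
    rw [Metric.uniformContinuousOn_iff] at hufc
    obtain ⟨δ1, hδ1, hf1⟩ := hufc ε hε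
    have hαuc := isCompact_Icc.uniformContinuousOn_of_continuous hαcont
    rw [Metric.uniformContinuousOn_iff] at hαuc
    obtain ⟨δα, hδα, hfα⟩ := hαuc (δ1/3) (by linarith)
    have hβuc := isCompact_Icc.uniformContinuousOn_of_continuous hβcont
    rw [Metric.uniformContinuousOn_iff] at hβuc
    obtain ⟨δβ, hδβ, hfβ⟩ := hβuc (δ1/3) (by linarith)
    refine ⟨min (min δα δβ) (δ1/3), by positivity, ?_⟩
    intro t ht s hs y z hts hyz
    have hts' : |t - s| < δα := lt_of_lt_of_le hts (le_trans (min_le_left _ _) (min_le_left _ _))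
    have hts'' : |t - s| < δβ := lt_of_lt_of_le hts (le_trans (min_le_left _ _) (min_le_right _ _))
    have hts3 : |t - s| < δ1/3 := lt_of_lt_of_le hts (min_le_right _ _)
    have hyz3 : |y - z| < δ1/3 := lt_of_lt_of_le hyz (min_le_right _ _)
    have hα3 : |α t - α s| < δ1/3 := by
      have := hfα t ht s hs (by rwa [Real.dist_eq])
      rwa [Real.dist_eq] at this
    have hβ3 : |β t - β s| < δ1/3 := by
      have := hfβ t ht s hs (by rwa [Real.dist_eq])
      rwa [Real.dist_eq] at this
    have hcc : |c t y - c s z| < δ1 := by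
      have h1 := hclipy s y z
      have h2 := hclipt t s y
      have h3 : |c t y - c s z| ≤ |c t y - c s y| + |c s y - c s z| := abs_sub_le _ _ _
      have h4 : max (|α t - α s|) (|β t - β s|) < δ1/3 := max_lt hα3 hβ3
      calc |c t y - c s z| ≤ |c t y - c s y| + |c s y - c s z| := h3
        _ < δ1/3 + (δ1/3 + δ1/3) := by
            have := lt_of_le_of_lt h2 h4
            have h5 : |c s y - c s z| < δ1/3 + δ1/3 := lt_of_le_of_lt h1 (by linarith)
            linarith
        _ = δ1 := by ring
    have hdist : dist ((t, c t y) : ℝ × ℝ) ((s, c s z) : ℝ × ℝ) < δ1 := by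
      rw [Prod.dist_eq]
      refine max_lt ?_ ?_
      · rw [Real.dist_eq]; linarith
      · rw [Real.dist_eq]; exact hcc
    have := hf1 (t, c t y) ⟨ht, hc5 t ht y⟩ (s, c s z) ⟨hs, hc5 s hs z⟩ hdist
    rw [Real.dist_eq] at this
    rw [hgdef]
    exact this.le
  -- identification of g with f inside the funnel
  have hgf : ∀ t ∈ Icc t0 (t0 + a), ∀ y : ℝ, α t ≤ y → y ≤ β t → g t y = f t y := by
    intro t ht y h1 h2
    rw [hgdef]
    simp only [hc2 t ht y h1 h2]
  have hgβ : ∀ t ∈ Icc t0 (t0 + a), ∀ y : ℝ, β t ≤ y → g t y = f t (β t) := by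
    intro t ht y h1
    rw [hgdef]
    simp only [hc3 t ht y h1]
  -- continuity of g in the y variable, for fixed t in I
  have hgconty : ∀ s ∈ Icc t0 (t0 + a), Continuous (fun y => g s y) := by
    intro s hs
    rw [hgdef]
    have hcc : Continuous (fun y : ℝ => c s y) := by
      rw [hcdef]
      exact continuous_const.max (continuous_id.min continuous_const)
    have hfc : Continuous (fun y : ℝ => f s y) := by
      rw [← continuousOn_univ]
      refine hf.comp (Continuous.continuousOn (continuous_const.prodMk continuous_id)) ?_
      intro y _
      exact ⟨hs, trivial⟩
    exact hfc.comp hcc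
  -- joint continuity of g on I × ℝ
  have hgU : ContinuousOn (fun p : ℝ × ℝ => g p.1 p.2) (Icc t0 (t0 + a) ×ˢ (univ : Set ℝ)) := by
    rw [hgdef]
    have hα1 : ContinuousOn (fun p : ℝ × ℝ => α p.1) (Icc t0 (t0 + a) ×ˢ (univ : Set ℝ)) :=
      hαcont.comp continuous_fst.continuousOn (fun p hp => hp.1)
    have hβ1 : ContinuousOn (fun p : ℝ × ℝ => β p.1) (Icc t0 (t0 + a) ×ˢ (univ : Set ℝ)) :=
      hβcont.comp continuous_fst.continuousOn (fun p hp => hp.1)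
    have hcU : ContinuousOn (fun p : ℝ × ℝ => c p.1 p.2)
        (Icc t0 (t0 + a) ×ˢ (univ : Set ℝ)) := by
      rw [hcdef]
      exact my_cont_max2 hα1 (my_cont_min2 continuous_snd.continuousOn hβ1)
    refine hf.comp (continuous_fst.continuousOn.prodMk hcU) ?_
    intro p hp
    exact ⟨hp.1, trivial⟩
  -- Lipschitz approximations from above
  have hap : ∀ k : ℕ, ∃ K : ℝ≥0, ∃ h : ℝ → ℝ → ℝ,
      (∀ t ∈ Icc t0 (t0 + a), LipschitzWith K (h t)) ∧
      (∀ y : ℝ, ContinuousOn (fun t => h t y) (Icc t0 (t0 + a))) ∧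
      (∀ t ∈ Icc t0 (t0 + a), ∀ y : ℝ, g t y ≤ h t y ∧ h t y ≤ g t y + 1/((k:ℝ)+1)) := by
    intro k
    exact my_approx hC hgb hguc (by positivity)
  choose K h hK1 hK2 hK3 using hap
  -- decreasing minima of the approximations
  obtain ⟨m, hm0, hmS⟩ : ∃ m : ℕ → ℝ → ℝ → ℝ, m 0 = h 0 ∧
      ∀ k, m (k+1) = fun t y => min (m k t y) (h (k+1) t y) :=
    ⟨fun k => Nat.rec (h 0) (fun k mk => fun t y => min (mk t y) (h (k+1) t y)) k,
      rfl, fun k => rfl⟩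
  obtain ⟨Km, hKm0, hKmS⟩ : ∃ Km : ℕ → ℝ≥0, Km 0 = K 0 ∧
      ∀ k, Km (k+1) = max (Km k) (K (k+1)) :=
    ⟨fun k => Nat.rec (K 0) (fun k Kk => max Kk (K (k+1))) k, rfl, fun k => rfl⟩
  have hmg : ∀ k : ℕ, ∀ t ∈ Icc t0 (t0 + a), ∀ y : ℝ,
      g t y ≤ m k t y ∧ m k t y ≤ g t y + 1/((k:ℝ)+1) := by
    intro k
    induction k with
    | zero =>
      intro t ht y
      rw [hm0]
      exact ⟨(hK3 0 t ht y).1, by exact_mod_cast (hK3 0 t ht y).2⟩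
    | succ k ih =>
      intro t ht y
      rw [hmS k]
      constructor
      · exact le_min (ih t ht y).1 (hK3 (k+1) t ht y).1
      · refine le_trans (min_le_right _ _) ?_
        have := (hK3 (k+1) t ht y).2
        push_cast at this ⊢
        linarith
  have hmanti : ∀ k : ℕ, ∀ t y : ℝ, m (k+1) t y ≤ m k t y := by
    intro k t y
    rw [hmS k]
    exact min_le_left _ _
  have hmlip : ∀ k : ℕ, ∀ t ∈ Icc t0 (t0 + a), LipschitzWith (Km k) (m k t) := by
    intro k
    induction k with
    | zero => intro t ht; rw [hm0, hKm0]; exact hK1 0 t ht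
    | succ k ih =>
      intro t ht
      rw [hmS k, hKmS k]
      exact (ih t ht).min (hK1 (k+1) t ht)
  have hmcont : ∀ k : ℕ, ∀ y : ℝ, ContinuousOn (fun t => m k t y) (Icc t0 (t0 + a)) := by
    intro k
    induction k with
    | zero => intro y; rw [hm0]; exact hK2 0 y
    | succ k ih =>
      intro y
      rw [hmS k]
      exact my_cont_min (ih y) (hK2 (k+1) y)
  have hmb : ∀ k : ℕ, ∀ t ∈ Icc t0 (t0 + a), ∀ y : ℝ, |m k t y + 1/((k:ℝ)+1)| ≤ C + 2 := by
    intro k t ht y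
    have h1 := (hmg k t ht y).1
    have h2 := (hmg k t ht y).2
    have h3 := abs_le.1 (hgb t ht y)
    have h4 : (0:ℝ) < (k:ℝ) + 1 := by positivity
    have h5 : 1/((k:ℝ)+1) ≤ 1 := by
      rw [div_le_one h4]; linarith [(Nat.cast_nonneg k : (0:ℝ) ≤ (k:ℝ))]
    have h6 : 0 < 1/((k:ℝ)+1) := by positivity
    rw [abs_le]
    constructor <;> nlinarith [h3.1, h3.2]
  -- Picard–Lindelöf solutions of the approximating problems
  have hsol : ∀ k : ℕ, ∃ φ : ℝ → ℝ, φ t0 = y0 ∧ ∀ t ∈ Icc t0 (t0 + a),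
      HasDerivWithinAt φ (m k t (φ t) + 1/((k:ℝ)+1)) (Icc t0 (t0 + a)) t := by
    intro k
    have hpl : IsPicardLindelof (fun t y => m k t y + 1/((k:ℝ)+1)) (tmin := t0) (tmax := t0+a)
        ⟨t0, htI⟩ y0 ((C+2)*a).toNNReal 0 (C+2).toNNReal (Km k) := by
      have hC2 : (0:ℝ) ≤ C + 2 := by linarith
      refine { lipschitzOnWith := ?_, continuousOn := ?_, norm_le := ?_, mul_max_le := ?_ }
      · intro t ht
        refine LipschitzWith.lipschitzOnWith ?_
        refine LipschitzWith.of_dist_le_mul fun y1 y2 => ?_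
        rw [dist_add_right]
        exact (hmlip k t ht).dist_le_mul y1 y2
      · intro y _
        exact (hmcont k y).add continuousOn_const
      · intro t ht x _
        rw [Real.norm_eq_abs, Real.coe_toNNReal _ hC2]
        exact hmb k t ht x
      · simp only [NNReal.coe_zero, sub_zero, tsub_zero, Real.coe_toNNReal _ hC2,
          Real.coe_toNNReal _ (mul_nonneg hC2 ha.le), show t0 + a - t0 = a by ring, sub_self,
          max_eq_left ha.le, le_refl]
    obtain ⟨ψ, h1, h2⟩ := hpl.exists_eq_forall_mem_Icc_hasDerivWithinAt₀
    exact ⟨ψ, h1, h2⟩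
  choose φ hφ0 hφd using hsol
  have hcast : ∀ k : ℕ, (0:ℝ) < 1/((k:ℝ)+1) := fun k => by positivity
  -- α is below every approximate solution
  have hφα : ∀ k : ℕ, ∀ t ∈ Icc t0 (t0 + a), α t ≤ φ k t := by
    intro k
    refine my_strict_comparison (u' := α')
      (v' := fun t => m k t (φ k t) + 1/((k:ℝ)+1))
      hαd (hφd k) (by rw [hφ0 k]; exact hα0) ?_
    intro t ht heq
    have h1 : α' t ≤ f t (α t) := hαf t ht
    have h2 : g t (α t) = f t (α t) := hgf t ht (α t) le_rfl (hαβ t ht)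
    have h3 := (hmg k t ht (α t)).1
    have h4 := hcast k
    show α' t < m k t (φ k t) + 1/((k:ℝ)+1)
    rw [← heq]
    linarith
  -- approximate solutions stay below a perturbed β
  have hφβ : ∀ k : ℕ, ∀ t ∈ Icc t0 (t0 + a),
      φ k t ≤ β t + (3/((k:ℝ)+1))*(t - t0) := by
    intro k
    have hvd : ∀ t ∈ Icc t0 (t0 + a), HasDerivWithinAt
        (fun t => β t + (3/((k:ℝ)+1))*(t - t0)) (β' t + 3/((k:ℝ)+1))
        (Icc t0 (t0 + a)) t := by
      intro t ht
      have h1 : HasDerivWithinAt (fun t => (3/((k:ℝ)+1))*(t - t0)) (3/((k:ℝ)+1))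
          (Icc t0 (t0 + a)) t := by
        simpa using ((hasDerivWithinAt_id t _).sub_const t0).const_mul (3/((k:ℝ)+1))
      exact (hβd t ht).add h1
    refine my_strict_comparison (u' := fun t => m k t (φ k t) + 1/((k:ℝ)+1))
      (v' := fun t => β' t + 3/((k:ℝ)+1)) (hφd k) hvd ?_ ?_
    · rw [hφ0 k, sub_self, mul_zero, add_zero]
      exact hβ0
    · intro t ht heq
      have he : (0:ℝ) ≤ (3/((k:ℝ)+1))*(t - t0) := by
        have := ht.1
        have := hcast k
        have h30 : (0:ℝ) ≤ 3/((k:ℝ)+1) := by positivity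
        nlinarith
      have hy : β t ≤ φ k t := by rw [heq]; linarith
      have h1 := (hmg k t ht (φ k t)).2
      have h2 : g t (φ k t) = f t (β t) := hgβ t ht (φ k t) hy
      have h3 : f t (β t) ≤ β' t := hβf t ht
      have h4 := hcast k
      show m k t (φ k t) + 1/((k:ℝ)+1) < β' t + 3/((k:ℝ)+1)
      have h5 : 3/((k:ℝ)+1) = 3*(1/((k:ℝ)+1)) := by ring
      linarith
  -- the approximate solutions decrease
  have hφanti : ∀ k : ℕ, ∀ t ∈ Icc t0 (t0 + a), φ (k+1) t ≤ φ k t := by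
    intro k
    refine my_strict_comparison
      (u' := fun t => m (k+1) t (φ (k+1) t) + 1/(((k+1:ℕ):ℝ)+1))
      (v' := fun t => m k t (φ k t) + 1/((k:ℝ)+1))
      (hφd (k+1)) (hφd k) (by rw [hφ0 (k+1), hφ0 k]) ?_
    intro t ht heq
    show m (k+1) t (φ (k+1) t) + 1/(((k+1:ℕ):ℝ)+1) < m k t (φ k t) + 1/((k:ℝ)+1)
    rw [heq]
    have h1 := hmanti k t (φ k t)
    have h2 : 1/(((k+1:ℕ):ℝ)+1) < 1/((k:ℝ)+1) := by
      have hp : (0:ℝ) < (k:ℝ)+1 := by positivity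
      have hlt : (k:ℝ)+1 < ((k+1:ℕ):ℝ)+1 := by push_cast; linarith
      exact one_div_lt_one_div_of_lt hp hlt
    linarith
  -- every genuine solution in the funnel is below every approximate solution
  have hφsol : ∀ ψ : ℝ → ℝ, ψ t0 = y0 →
      (∀ t ∈ Icc t0 (t0 + a), HasDerivWithinAt ψ (f t (ψ t)) (Icc t0 (t0 + a)) t) →
      (∀ t ∈ Icc t0 (t0 + a), α t ≤ ψ t ∧ ψ t ≤ β t) →
      ∀ k : ℕ, ∀ t ∈ Icc t0 (t0 + a), ψ t ≤ φ k t := by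
    intro ψ hψ0 hψd hψb k
    refine my_strict_comparison (u' := fun t => f t (ψ t))
      (v' := fun t => m k t (φ k t) + 1/((k:ℝ)+1))
      hψd (hφd k) (by rw [hψ0, hφ0 k]) ?_
    intro t ht heq
    have h2 : g t (ψ t) = f t (ψ t) := hgf t ht (ψ t) (hψb t ht).1 (hψb t ht).2
    have h3 := (hmg k t ht (ψ t)).1
    have h4 := hcast k
    show f t (ψ t) < m k t (φ k t) + 1/((k:ℝ)+1)
    rw [← heq]
    linarith
  -- the limit function
  obtain ⟨φh, hφhdef⟩ : ∃ φh : ℝ → ℝ, φh = fun t => ⨅ k, φ k t := ⟨_, rfl⟩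
  have hbddb : ∀ t ∈ Icc t0 (t0 + a), BddBelow (range fun k => φ k t) := by
    intro t ht
    refine ⟨α t, ?_⟩
    rintro b ⟨k, rfl⟩
    exact hφα k t ht
  have hanti : ∀ t ∈ Icc t0 (t0 + a), Antitone (fun k => φ k t) :=
    fun t ht => antitone_nat_of_succ_le (fun k => hφanti k t ht)
  have htend : ∀ t ∈ Icc t0 (t0 + a), Tendsto (fun k => φ k t) atTop (𝓝 (φh t)) := by
    intro t ht
    rw [hφhdef]
    exact tendsto_atTop_ciInf (hanti t ht) (hbddb t ht)
  have hφh0 : φh t0 = y0 := by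
    rw [hφhdef]
    simp only [hφ0]
    exact ciInf_const
  have hφhα : ∀ t ∈ Icc t0 (t0 + a), α t ≤ φh t := by
    intro t ht; rw [hφhdef]; exact le_ciInf (fun k => hφα k t ht)
  have hφhβ : ∀ t ∈ Icc t0 (t0 + a), φh t ≤ β t := by
    intro t ht
    have h0 : Tendsto (fun k : ℕ => (1:ℝ)/((k:ℝ)+1)) atTop (𝓝 0) :=
      tendsto_one_div_add_atTop_nhds_zero_nat
    have hlim : Tendsto (fun k : ℕ => β t + (3/((k:ℝ)+1))*(t - t0)) atTop (𝓝 (β t)) := by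
      have heqf : (fun k : ℕ => β t + (3/((k:ℝ)+1))*(t - t0))
          = fun k : ℕ => β t + (3*(t - t0)) * ((1:ℝ)/((k:ℝ)+1)) := by
        funext k; ring
      rw [heqf]
      simpa using tendsto_const_nhds.add (h0.const_mul (3*(t - t0)))
    exact le_of_tendsto_of_tendsto' (htend t ht) hlim (fun k => hφβ k t ht)
  -- uniform Lipschitz estimate and continuity of the limit
  have hφlipk : ∀ k : ℕ, ∀ s ∈ Icc t0 (t0+a), ∀ t ∈ Icc t0 (t0+a),
      |φ k s - φ k t| ≤ (C+2)*|s - t| := by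
    intro k s hs t ht
    have hbound : ∀ x ∈ Icc t0 (t0+a), ‖m k x (φ k x) + 1/((k:ℝ)+1)‖ ≤ C + 2 := by
      intro x hx; rw [Real.norm_eq_abs]; exact hmb k x hx (φ k x)
    have := (convex_Icc t0 (t0+a)).norm_image_sub_le_of_norm_hasDerivWithin_le
      (hφd k) hbound ht hs
    simpa [Real.norm_eq_abs] using this
  have hφhlip : ∀ s ∈ Icc t0 (t0+a), ∀ t ∈ Icc t0 (t0+a),
      |φh s - φh t| ≤ (C+2)*|s - t| := by
    intro s hs t ht
    have h1 : Tendsto (fun k => |φ k s - φ k t|) atTop (𝓝 (|φh s - φh t|)) :=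
      ((htend s hs).sub (htend t ht)).abs
    exact le_of_tendsto h1 (Eventually.of_forall fun k => hφlipk k s hs t ht)
  have hφhcont : ContinuousOn φh (Icc t0 (t0 + a)) := by
    have hl : LipschitzOnWith (C+2).toNNReal φh (Icc t0 (t0+a)) := by
      refine LipschitzOnWith.of_dist_le_mul ?_
      intro x hx y hy
      rw [Real.dist_eq, Real.dist_eq, Real.coe_toNNReal _ (by linarith : (0:ℝ) ≤ C+2)]
      exact hφhlip x hx y hy
    exact hl.continuousOn
  -- the integral equation for the approximations
  have hFkcont : ∀ k : ℕ, ContinuousOn (fun s => m k s (φ k s) + 1/((k:ℝ)+1))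
      (Icc t0 (t0+a)) := by
    intro k
    exact ContinuousOn.add
      (my_cont_comp (hmlip k) (hmcont k) (fun t ht => (hφd k t ht).continuousWithinAt))
      continuousOn_const
  have hIeq : ∀ k : ℕ, ∀ t ∈ Icc t0 (t0+a),
      φ k t = y0 + ∫ s in t0..t, (m k s (φ k s) + 1/((k:ℝ)+1)) := by
    intro k t ht
    have hsub : Icc t0 t ⊆ Icc t0 (t0+a) := Icc_subset_Icc_right ht.2
    have heqi : ∫ s in t0..t, (m k s (φ k s) + 1/((k:ℝ)+1)) = φ k t - φ k t0 := by
      refine integral_eq_sub_of_hasDeriv_right_of_le ht.1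
        (fun s hs => (hφd k s (hsub hs)).continuousWithinAt.mono hsub) ?_ ?_
      · intro x hx
        have hxI : x ∈ Icc t0 (t0+a) := ⟨hx.1.le, le_trans hx.2.le ht.2⟩
        refine (hφd k x hxI).mono_of_mem_nhdsWithin ?_
        have hx2 : x < t0 + a := lt_of_lt_of_le hx.2 ht.2
        filter_upwards [Ioc_mem_nhdsGT_of_mem (⟨le_refl x, hx2⟩ : x ∈ Ico x (t0+a))] with s hs
        exact ⟨le_trans hxI.1 hs.1.le, hs.2⟩
      · exact ((hFkcont k).mono (by rw [uIcc_of_le ht.1]; exact hsub)).intervalIntegrable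
    rw [heqi, hφ0 k]; ring
  -- pass to the limit in the integral equation
  have hkey : ∀ t ∈ Icc t0 (t0+a), φh t = y0 + ∫ s in t0..t, g s (φh s) := by
    intro t ht
    have hsub : Icc t0 t ⊆ Icc t0 (t0+a) := Icc_subset_Icc_right ht.2
    have hIoc : uIoc t0 t ⊆ Icc t0 (t0+a) := by
      rw [uIoc_of_le ht.1]
      exact fun s hs => hsub ⟨hs.1.le, hs.2⟩
    have hDCT : Tendsto (fun k => ∫ s in t0..t, (m k s (φ k s) + 1/((k:ℝ)+1))) atTop
        (𝓝 (∫ s in t0..t, g s (φh s))) := by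
      refine tendsto_integral_filter_of_dominated_convergence (fun _ => C+2)
        (Eventually.of_forall fun k => ?_) (Eventually.of_forall fun k => ?_) ?_ ?_
      · exact ((hFkcont k).mono hIoc).aestronglyMeasurable measurableSet_uIoc
      · refine ae_of_all _ fun s hs => ?_
        rw [Real.norm_eq_abs]
        exact hmb k s (hIoc hs) (φ k s)
      · exact intervalIntegrable_const
      · refine ae_of_all _ fun s hs => ?_
        have hsI := hIoc hs
        have hterm1 : Tendsto (fun k => m k s (φ k s) - g s (φ k s)) atTop (𝓝 0) := by
          refine squeeze_zero (fun k => by linarith [(hmg k s hsI (φ k s)).1])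
            (fun k => by linarith [(hmg k s hsI (φ k s)).2])
            tendsto_one_div_add_atTop_nhds_zero_nat
        have hterm2 : Tendsto (fun k => g s (φ k s)) atTop (𝓝 (g s (φh s))) :=
          ((hgconty s hsI).tendsto (φh s)).comp (htend s hsI)
        have hterm3 : Tendsto (fun k : ℕ => (1:ℝ)/((k:ℝ)+1)) atTop (𝓝 0) :=
          tendsto_one_div_add_atTop_nhds_zero_nat
        have heqf : (fun k : ℕ => m k s (φ k s) + 1/((k:ℝ)+1))
            = fun k : ℕ => ((m k s (φ k s) - g s (φ k s)) + g s (φ k s)) + 1/((k:ℝ)+1) := by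
          funext k; ring
        rw [heqf]
        simpa using (hterm1.add hterm2).add hterm3
    have heqf2 : (fun k => φ k t)
        = fun k => y0 + ∫ s in t0..t, (m k s (φ k s) + 1/((k:ℝ)+1)) :=
      funext fun k => hIeq k t ht
    have h1 : Tendsto (fun k => φ k t) atTop (𝓝 (y0 + ∫ s in t0..t, g s (φh s))) := by
      rw [heqf2]
      exact hDCT.const_add y0
    exact tendsto_nhds_unique (htend t ht) h1
  -- globally continuous version of the integrand and the FTC step
  obtain ⟨π, hπdef⟩ : ∃ π : ℝ → ℝ, π = fun s => max t0 (min s (t0+a)) := ⟨_, rfl⟩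
  have hπcont : Continuous π := by
    rw [hπdef]; exact continuous_const.max (continuous_id.min continuous_const)
  have hπmem : ∀ s : ℝ, π s ∈ Icc t0 (t0+a) := by
    intro s; rw [hπdef]
    exact ⟨le_max_left _ _, max_le haa (min_le_right _ _)⟩
  have hπid : ∀ s ∈ Icc t0 (t0+a), π s = s := by
    intro s hs
    rw [hπdef]
    show max t0 (min s (t0+a)) = s
    rw [min_eq_left hs.2, max_eq_right hs.1]
  have hGcont : ContinuousOn (fun s => g s (φh s)) (Icc t0 (t0+a)) := by
    refine hgU.comp (continuous_id.continuousOn.prodMk hφhcont) ?_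
    intro s hs
    exact ⟨hs, trivial⟩
  obtain ⟨G, hGdef⟩ : ∃ G : ℝ → ℝ, G = fun s => g (π s) (φh (π s)) := ⟨_, rfl⟩
  have hGc : Continuous G := by
    rw [hGdef]
    exact hGcont.comp_continuous hπcont hπmem
  have hGeq : ∀ s ∈ Icc t0 (t0+a), G s = g s (φh s) := by
    intro s hs; rw [hGdef]; simp only [hπid s hs]
  have hkey2 : ∀ t ∈ Icc t0 (t0+a), φh t = y0 + ∫ s in t0..t, G s := by
    intro t ht
    rw [hkey t ht]
    congr 1
    refine (integral_congr ?_)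
    intro s hs
    rw [uIcc_of_le ht.1] at hs
    exact (hGeq s (Icc_subset_Icc_right ht.2 hs)).symm
  have hφhd : ∀ t ∈ Icc t0 (t0+a), HasDerivWithinAt φh (f t (φh t)) (Icc t0 (t0+a)) t := by
    intro t ht
    have hFTC : HasDerivAt (fun u => y0 + ∫ s in t0..u, G s) (G t) t := by
      have := integral_hasDerivAt_right (a := t0) (hGc.intervalIntegrable t0 t)
        (hGc.stronglyMeasurableAtFilter _ _) hGc.continuousAt
      exact this.const_add y0
    have hwithin := (hFTC.hasDerivWithinAt (s := Icc t0 (t0+a))).congr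
      (fun s hs => hkey2 s hs) (hkey2 t ht)
    have hGf : G t = f t (φh t) := by
      rw [hGeq t ht]
      exact hgf t ht (φh t) (hφhα t ht) (hφhβ t ht)
    rwa [hGf] at hwithin
  refine ⟨φh, hφh0, hφhd, fun t ht => ⟨hφhα t ht, hφhβ t ht⟩, ?_⟩
  intro ψ h0 hd hb t ht
  rw [hφhdef]
  exact le_ciInf (fun k => hφsol ψ h0 hd hb k t ht)

/-- Between ordered lower and upper solutions `α ≤ β` of the nonlocal problem
`y' = f(t,y)`, `y t0 = y0` on `I = [t0, t0+a]`, there exist a least solution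
`φlow` and a greatest solution `φhigh` among all solutions lying in `[α, β]`. -/
theorem extremal_solutions_between (t0 y0 a : ℝ) (ha : 0 < a)
    (f : ℝ → ℝ → ℝ)
    (hf : ContinuousOn (fun p : ℝ × ℝ => f p.1 p.2)
      (Icc t0 (t0 + a) ×ˢ (univ : Set ℝ)))
    (α β α' β' : ℝ → ℝ)
    (hαd : ∀ t ∈ Icc t0 (t0 + a), HasDerivWithinAt α (α' t) (Icc t0 (t0 + a)) t)
    (hαc : ContinuousOn α' (Icc t0 (t0 + a)))
    (hα0 : α t0 ≤ y0)
    (hαf : ∀ t ∈ Icc t0 (t0 + a), α' t ≤ f t (α t))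
    (hβd : ∀ t ∈ Icc t0 (t0 + a), HasDerivWithinAt β (β' t) (Icc t0 (t0 + a)) t)
    (hβc : ContinuousOn β' (Icc t0 (t0 + a)))
    (hβ0 : y0 ≤ β t0)
    (hβf : ∀ t ∈ Icc t0 (t0 + a), f t (β t) ≤ β' t)
    (hαβ : ∀ t ∈ Icc t0 (t0 + a), α t ≤ β t) :
    ∃ φlow φhigh : ℝ → ℝ,
      (φlow t0 = y0 ∧
        (∀ t ∈ Icc t0 (t0 + a),
          HasDerivWithinAt φlow (f t (φlow t)) (Icc t0 (t0 + a)) t) ∧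
        (∀ t ∈ Icc t0 (t0 + a), α t ≤ φlow t ∧ φlow t ≤ β t)) ∧
      (φhigh t0 = y0 ∧
        (∀ t ∈ Icc t0 (t0 + a),
          HasDerivWithinAt φhigh (f t (φhigh t)) (Icc t0 (t0 + a)) t) ∧
        (∀ t ∈ Icc t0 (t0 + a), α t ≤ φhigh t ∧ φhigh t ≤ β t)) ∧
      ∀ φ : ℝ → ℝ, φ t0 = y0 →
        (∀ t ∈ Icc t0 (t0 + a),
          HasDerivWithinAt φ (f t (φ t)) (Icc t0 (t0 + a)) t) →
        (∀ t ∈ Icc t0 (t0 + a), α t ≤ φ t ∧ φ t ≤ β t) →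
        ∀ t ∈ Icc t0 (t0 + a), φlow t ≤ φ t ∧ φ t ≤ φhigh t := by
  -- the greatest solution, directly
  obtain ⟨φhigh, hh0, hhd, hhb, hhmax⟩ :=
    my_greatest t0 y0 a ha f hf α β α' β' hαd hα0 hαf hβd hβ0 hβf hαβ
  -- the least solution, via the reflection y ↦ -y
  have hf' : ContinuousOn (fun p : ℝ × ℝ => -f p.1 (-p.2))
      (Icc t0 (t0 + a) ×ˢ (univ : Set ℝ)) := by
    refine ContinuousOn.neg ?_
    refine hf.comp (continuous_fst.prodMk continuous_snd.neg).continuousOn ?_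
    intro p hp
    exact ⟨hp.1, trivial⟩
  obtain ⟨ψ, hp0, hpd, hpb, hpmax⟩ :=
    my_greatest t0 (-y0) a ha (fun t y => -f t (-y)) hf'
      (fun t => -β t) (fun t => -α t) (fun t => -β' t) (fun t => -α' t)
      (fun t ht => (hβd t ht).neg)
      (by simpa using hβ0)
      (by intro t ht; simpa using hβf t ht)
      (fun t ht => (hαd t ht).neg)
      (by simpa using hα0)
      (by intro t ht; simpa using hαf t ht)
      (by intro t ht; simpa using hαβ t ht)
  refine ⟨fun t => -ψ t, φhigh, ⟨by show -ψ t0 = y0; rw [hp0]; ring, ?_, ?_⟩, ⟨hh0, hhd, hhb⟩, ?_⟩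
  · intro t ht
    have := (hpd t ht).neg
    simp only [neg_neg] at this ⊢
    exact this
  · intro t ht
    have h1 : -β t ≤ ψ t := (hpb t ht).1
    have h2 : ψ t ≤ -α t := (hpb t ht).2
    show α t ≤ -ψ t ∧ -ψ t ≤ β t
    constructor <;> linarith
  · intro φ h0 hd hb t ht
    constructor
    · have hψφ := hpmax (fun t => -φ t) (by show -φ t0 = -y0; rw [h0]) ?_ ?_ t ht
      · have hψφ' : -φ t ≤ ψ t := hψφ
        show -ψ t ≤ φ t
        linarith
      · intro s hs
        have := (hd s hs).neg
        simp only [neg_neg] at this ⊢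
        exact this
      · intro s hs
        have h1 : α s ≤ φ s := (hb s hs).1
        have h2 : φ s ≤ β s := (hb s hs).2
        show -β s ≤ -φ s ∧ -φ s ≤ -α s
        exact ⟨by linarith, by linarith⟩
    · exact hhmax φ h0 hd hb t ht
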